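/- Feasibility of simultaneous impersonation at the feature level: let M^{(1)},…,M^{(p)} be matrices whose columns are vectors in ℝ^n, with w columns each and p·w ≤ n, and suppose the family of all p·w columns is linearly independent. Then for any target templates T^{(1)},…,T^{(p)} ∈ {0,1}^w there exists a feature vector F ∈ ℝ^n such that T(F, M^{(ℓ)}) = T^{(ℓ)} for every ℓ ∈ {1,…,p}; in particular, a single feature vector can realize the templates of ⌊n/w⌋ distinct users simultaneously. -/

import Mathlib

/-- The binary template of a feature vector `F ∈ ℝ^n` under a projection matrix
`M` with columns `M_1, …, M_w ∈ ℝ^n`: coordinate `j` is `1` (`true`) iff the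
dot product `F·M_j ≥ 0`. -/
noncomputable def template {n w : ℕ} (F : Fin n → ℝ) (M : Matrix (Fin n) (Fin w) ℝ) :
    Fin w → Bool :=
  fun j => decide (0 ≤ ∑ k, F k * M k j)

/-- Feasibility of simultaneous impersonation at the feature level: given `p`
matrices `M⁽¹⁾, …, M⁽ᵖ⁾` of `w` columns each, with `p·w ≤ n` and the family of
all `p·w` columns linearly independent, for any target templates
`T⁽¹⁾, …, T⁽ᵖ⁾ ∈ {0,1}^w` there exists a feature vector `F ∈ ℝ^n` realizing all
of them simultaneously: `T(F, M⁽ˡ⁾) = T⁽ˡ⁾` for every `ℓ`. -/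
theorem simultaneous_impersonation_feasible
    {n w p : ℕ} (hpw : p * w ≤ n)
    (M : Fin p → Matrix (Fin n) (Fin w) ℝ)
    (hM : LinearIndependent ℝ (fun lj : Fin p × Fin w => fun k => M lj.1 k lj.2))
    (T : Fin p → Fin w → Bool) :
    ∃ F : Fin n → ℝ, ∀ ℓ, template F (M ℓ) = T ℓ := by
  classical
  set v : Fin p × Fin w → (Fin n → ℝ) := fun lj => fun k => M lj.1 k lj.2 with hv
  set d : Fin p × Fin w → ℝ := fun lj => if T lj.1 lj.2 then 1 else -1 with hd
  -- a linear functional on the span sending v lj to d lj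
  let b := Module.Basis.span hM
  let f₀ : Submodule.span ℝ (Set.range v) →ₗ[ℝ] ℝ := b.constr ℝ d
  obtain ⟨f, hf⟩ := LinearMap.exists_extend f₀
  have hfv : ∀ lj, f (v lj) = d lj := by
    intro lj
    have h1 : f (v lj) = f₀ ⟨v lj, Submodule.subset_span (Set.mem_range_self lj)⟩ := by
      rw [← hf]; rfl
    have h2 : (b lj : Fin n → ℝ) = v lj := by rw [Module.Basis.span_apply hM lj]
    have h3 : f₀ (b lj) = d lj := Module.Basis.constr_basis b ℝ d lj
    have h4 : (⟨v lj, Submodule.subset_span (Set.mem_range_self lj)⟩ :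
        Submodule.span ℝ (Set.range v)) = b lj := by
      apply Subtype.ext; exact h2.symm
    rw [h1, h4, h3]
  refine ⟨fun k => f (Pi.single k (1:ℝ) : Fin n → ℝ), fun ℓ => ?_⟩
  funext j
  have key : ∑ k, f (Pi.single k (1:ℝ) : Fin n → ℝ) * M ℓ k j = d (ℓ, j) := by
    have hx : (v (ℓ, j)) = ∑ k, (M ℓ k j) • (Pi.single k (1:ℝ) : Fin n → ℝ) := by
      funext m
      simp [hv, Finset.sum_apply, Pi.single_apply, mul_comm]
    calc ∑ k, f (Pi.single k (1:ℝ) : Fin n → ℝ) * M ℓ k j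
        = f (∑ k, (M ℓ k j) • (Pi.single k (1:ℝ) : Fin n → ℝ)) := by
          rw [map_sum]; simp [mul_comm]
      _ = f (v (ℓ, j)) := by rw [← hx]
      _ = d (ℓ, j) := hfv (ℓ, j)
  simp only [template, key, hd]
  by_cases h : T ℓ j <;> simp [h]
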